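/- Let T be a diagonal operator on H with T e_n = α_n e_n for all n, where {α_n} is a bounded sequence of complex numbers. Then P(T) is closed in H if and only if the set {α_n : n ∈ ℕ} ∩ G is finite. -/

import Mathlib

open scoped InnerProductSpace Classical

namespace DiagAux

variable {H : Type*} [NormedAddCommGroup H] [InnerProductSpace ℂ H] [CompleteSpace H]

/-- If `∑ c n • e n = x` then the coefficients of `x` are the `c n`. -/
lemma repr_hasSum (e : HilbertBasis ℕ ℂ H) {c : ℕ → ℂ} {x : H}
    (h : HasSum (fun n => c n • e n) x) (k : ℕ) : e.repr x k = c k := by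
  have h2 : HasSum (fun n => (innerSL ℂ (e k)) (c n • e n)) ((innerSL ℂ (e k)) x) :=
    (innerSL ℂ (e k)).hasSum h
  have h3 : (fun n => (innerSL ℂ (e k)) (c n • e n)) = fun n => if n = k then c k else 0 := by
    funext n
    simp only [innerSL_apply_apply, inner_smul_right]
    rw [orthonormal_iff_ite.mp e.orthonormal]
    by_cases hnk : n = k
    · subst hnk; simp
    · simp [hnk, Ne.symm hnk]
  rw [h3] at h2
  have h4 : HasSum (fun n => if n = k then c k else 0) (c k) := hasSum_ite_eq k (c k)
  rw [e.repr_apply_apply]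
  simpa [innerSL_apply_apply] using h2.unique h4

lemma pow_apply_basis (e : HilbertBasis ℕ ℂ H) (α : ℕ → ℂ) (T : H →L[ℂ] H)
    (hT : ∀ n, T (e n) = α n • e n) (m n : ℕ) :
    (T ^ m) (e n) = (α n ^ m) • e n := by
  induction m with
  | zero => simp
  | succ m ih =>
    rw [pow_succ, ContinuousLinearMap.mul_apply, hT, map_smul, ih, smul_smul, pow_succ]
    ring_nf

lemma repr_pow (e : HilbertBasis ℕ ℂ H) (α : ℕ → ℂ) (T : H →L[ℂ] H)
    (hT : ∀ n, T (e n) = α n • e n) (m : ℕ) (x : H) (k : ℕ) :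
    e.repr ((T ^ m) x) k = α k ^ m * e.repr x k := by
  have h1 : HasSum (fun i => e.repr x i • e i) x := e.hasSum_repr x
  have h2 : HasSum (fun i => (T ^ m) (e.repr x i • e i)) ((T ^ m) x) :=
    (T ^ m).hasSum h1
  have h3 : (fun i => (T ^ m) (e.repr x i • e i))
      = fun i => (α i ^ m * e.repr x i) • e i := by
    funext i
    rw [map_smul, pow_apply_basis e α T hT, smul_smul, mul_comm]
  rw [h3] at h2
  exact repr_hasSum e h2 k

lemma periodic_iff (e : HilbertBasis ℕ ℂ H) (α : ℕ → ℂ) (T : H →L[ℂ] H)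
    (hT : ∀ n, T (e n) = α n • e n) (m : ℕ) (x : H) :
    (T ^ m) x = x ↔ ∀ k, α k ^ m * e.repr x k = e.repr x k := by
  constructor
  · intro h k
    rw [← repr_pow e α T hT, h]
  · intro h
    apply e.repr.injective
    apply lp.ext
    funext k
    rw [repr_pow e α T hT, h]

/-- an exponent killing `z` whenever `z` is a root of unity -/
noncomputable def ordOf (z : ℂ) : ℕ :=
  if h : ∃ k : ℕ, 0 < k ∧ z ^ k = 1 then h.choose else 1

lemma ordOf_pos (z : ℂ) : 0 < ordOf z := by
  unfold ordOf
  split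
  · next h => exact h.choose_spec.1
  · exact one_pos

lemma pow_ordOf {z : ℂ} (h : ∃ k : ℕ, 0 < k ∧ z ^ k = 1) : z ^ ordOf z = 1 := by
  unfold ordOf
  rw [dif_pos h]
  exact h.choose_spec.2

lemma pow_eq_one_of_dvd {z : ℂ} {k m : ℕ} (hk : z ^ k = 1) (hkm : k ∣ m) : z ^ m = 1 := by
  obtain ⟨d, rfl⟩ := hkm
  rw [pow_mul, hk, one_pow]

end DiagAux

open DiagAux

/-- For a diagonal operator `T e_n = α_n • e_n`, the set of periodic points of `T`
is closed in `H` iff only finitely many of the values `α_n` are roots of unity. -/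
theorem diagonal_periodic_points_closed_iff
    {H : Type*} [NormedAddCommGroup H] [InnerProductSpace ℂ H] [CompleteSpace H]
    (e : HilbertBasis ℕ ℂ H) (α : ℕ → ℂ) (T : H →L[ℂ] H)
    (hT : ∀ n, T (e n) = α n • e n) :
    IsClosed {x : H | ∃ m : ℕ, 0 < m ∧ (T ^ m) x = x}
      ↔ (Set.range α ∩ {z : ℂ | ∃ k : ℕ, 0 < k ∧ z ^ k = 1}).Finite := by
  constructor
  · -- closed → finite, by contraposition
    intro hclosed
    by_contra hinf
    -- the coefficient sequence
    set c : ℕ → ℂ := fun n => if (∃ k : ℕ, 0 < k ∧ (α n) ^ k = 1) then (1/2 : ℂ) ^ n else 0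
      with hc
    have hsum : Summable (fun n => c n • e n) := by
      apply Summable.of_norm_bounded (g := fun n => (1/2 : ℝ) ^ n) summable_geometric_two
      intro n
      rw [norm_smul, e.orthonormal.1 n, mul_one]
      simp only [hc]
      by_cases h : ∃ k : ℕ, 0 < k ∧ (α n) ^ k = 1
      · rw [if_pos h, norm_pow]
        norm_num
      · rw [if_neg h, norm_zero]
        positivity
    have hx : HasSum (fun n => c n • e n) (∑' n, c n • e n) := hsum.hasSum
    set x : H := ∑' n, c n • e n with hxdef
    have hrepr : ∀ k, e.repr x k = c k := fun k => repr_hasSum e hx k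
    -- x is in the closure of the periodic points
    have hmemcl : x ∈ closure {y : H | ∃ m : ℕ, 0 < m ∧ (T ^ m) y = y} := by
      apply mem_closure_of_tendsto hx.tendsto_sum_nat
      filter_upwards with N
      refine ⟨∏ n ∈ Finset.range N, ordOf (α n), Finset.prod_pos fun n _ => ordOf_pos _, ?_⟩
      rw [periodic_iff e α T hT]
      intro k
      have hyrepr : e.repr (∑ n ∈ Finset.range N, c n • e n) k
          = if k ∈ Finset.range N then c k else 0 := by
        apply repr_hasSum e
        have h0 : ∀ n ∉ Finset.range N,
            (fun n => (if n ∈ Finset.range N then c n else 0) • e n) n = 0 := by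
          intro n hn
          simp [hn]
        have hsum' : HasSum _ _ := hasSum_sum_of_ne_finset_zero h0
        have heq : (∑ b ∈ Finset.range N, (if b ∈ Finset.range N then c b else 0) • e b)
            = ∑ n ∈ Finset.range N, c n • e n :=
          Finset.sum_congr rfl fun n hn => by rw [if_pos hn]
        rwa [heq] at hsum'
      rw [hyrepr]
      by_cases hkN : k ∈ Finset.range N
      · simp only [hkN, if_true]
        by_cases hroot : ∃ j : ℕ, 0 < j ∧ (α k) ^ j = 1
        · have : (α k) ^ (∏ n ∈ Finset.range N, ordOf (α n)) = 1 :=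
            pow_eq_one_of_dvd (pow_ordOf hroot) (Finset.dvd_prod_of_mem _ hkN)
          rw [this, one_mul]
        · simp [hc, hroot]
      · simp [hkN]
    -- but x is not periodic
    have hnotmem : x ∉ {y : H | ∃ m : ℕ, 0 < m ∧ (T ^ m) y = y} := by
      rintro ⟨m, hm, hTm⟩
      rw [periodic_iff e α T hT] at hTm
      have hsubset : (Set.range α ∩ {z : ℂ | ∃ k : ℕ, 0 < k ∧ z ^ k = 1})
          ⊆ ↑(Polynomial.nthRootsFinset m (1 : ℂ)) := by
        rintro z ⟨⟨k, rfl⟩, hroot⟩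
        rw [Finset.mem_coe, Polynomial.mem_nthRootsFinset hm]
        have h1 := hTm k
        rw [hrepr k] at h1
        have hroot' : ∃ j : ℕ, 0 < j ∧ (α k) ^ j = 1 := hroot
        have hck : c k ≠ 0 := by
          simp only [hc]
          rw [if_pos hroot']
          exact pow_ne_zero _ (by norm_num)
        have h2 : α k ^ m * c k = 1 * c k := by rw [h1, one_mul]
        exact mul_right_cancel₀ hck h2
      exact hinf ((Polynomial.nthRootsFinset m (1 : ℂ)).finite_toSet.subset hsubset)
    exact hnotmem (hclosed.closure_subset hmemcl)
  · -- finite → closed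
    intro hfin
    set M : ℕ := ∏ z ∈ hfin.toFinset, ordOf z with hM
    have hMpos : 0 < M := Finset.prod_pos fun z _ => ordOf_pos z
    have hset : {x : H | ∃ m : ℕ, 0 < m ∧ (T ^ m) x = x} = {x : H | (T ^ M) x = x} := by
      ext x
      constructor
      · rintro ⟨m, hm, hx⟩
        show (T ^ M) x = x
        rw [periodic_iff e α T hT] at hx ⊢
        intro k
        by_cases hck : e.repr x k = 0
        · rw [hck, mul_zero]
        · have hαm : α k ^ m = 1 := by
            have : α k ^ m * e.repr x k = 1 * e.repr x k := by rw [hx k, one_mul]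
            exact mul_right_cancel₀ hck this
          have hmemA : α k ∈ hfin.toFinset := by
            rw [Set.Finite.mem_toFinset]
            exact ⟨⟨k, rfl⟩, m, hm, hαm⟩
          have : α k ^ M = 1 :=
            pow_eq_one_of_dvd (pow_ordOf ⟨m, hm, hαm⟩) (Finset.dvd_prod_of_mem _ hmemA)
          rw [this, one_mul]
      · intro hx
        exact ⟨M, hMpos, hx⟩
    rw [hset]
    exact isClosed_eq (T ^ M).continuous continuous_id
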